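/- Let V₁ and V₂ be independent ℤ₊-valued LC random variables, each of whose support is an interval of ℤ₊ containing 0. Then for every integer t ≥ 0 and every integer s such that P(V₁ + V₂ = s) > 0 and P(V₁ + V₂ = s+1) > 0, one has P(V₁ ≤ t | V₁ + V₂ = s+1) ≤ P(V₁ ≤ t | V₁ + V₂ = s). -/
import Mathlib


/-- `P(V₁ + V₂ = s)`: convolution of the mass functions `p₁`, `p₂`. -/
noncomputable def convProb (p₁ p₂ : ℕ → ℝ) (s : ℕ) : ℝ :=
  ∑ x ∈ Finset.range (s + 1), p₁ x * p₂ (s - x)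

/-- `P(V₁ ≤ t, V₁ + V₂ = s)`. -/
noncomputable def convProbLe (p₁ p₂ : ℕ → ℝ) (t s : ℕ) : ℝ :=
  ∑ x ∈ Finset.range (s + 1), if x ≤ t then p₁ x * p₂ (s - x) else 0

open Finset

lemma keylem (p : ℕ → ℝ) (h0 : ∀ s, 0 ≤ p s)
    (hlc : ∀ s : ℕ, 1 ≤ s → p s ^ 2 ≥ p (s - 1) * p (s + 1))
    (hint : ∀ s t : ℕ, t ≤ s → 0 < p s → 0 < p t) :
    ∀ k i : ℕ, p i * p (i + k + 1) ≤ p (i + 1) * p (i + k) := by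
  intro k
  induction k with
  | zero => intro i; simp [mul_comm]
  | succ k ih =>
    intro i
    rw [show i + (k + 1) = i + k + 1 from by ring]
    set j := i + k + 1 with hj
    by_cases hjz : p j = 0
    · have hz1 : p (j + 1) = 0 := by
        by_contra h
        have := hint (j + 1) j (by omega) (lt_of_le_of_ne (h0 _) (Ne.symm h))
        exact absurd hjz (ne_of_gt this)
      rw [hz1]
      simp [mul_nonneg (h0 _) (h0 _)]
    · have hjpos : 0 < p j := lt_of_le_of_ne (h0 _) (Ne.symm hjz)
      have hikpos : 0 < p (i + k) := hint j (i + k) (by omega) hjpos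
      have hlcj := hlc j (by omega)
      have hjm : j - 1 = i + k := by omega
      rw [hjm] at hlcj
      have hih := ih i
      nlinarith [h0 i, h0 (i + 1), h0 (j + 1), mul_le_mul_of_nonneg_left hlcj (h0 i),
        mul_le_mul_of_nonneg_right hih hjpos.le]

/-- key comparison: for `i ≤ j`, `p i * p (j+1) ≤ p (i+1) * p j`. -/
lemma keylem' (p : ℕ → ℝ) (h0 : ∀ s, 0 ≤ p s)
    (hlc : ∀ s : ℕ, 1 ≤ s → p s ^ 2 ≥ p (s - 1) * p (s + 1))
    (hint : ∀ s t : ℕ, t ≤ s → 0 < p s → 0 < p t)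
    (i j : ℕ) (hij : i ≤ j) : p i * p (j + 1) ≤ p (i + 1) * p j := by
  obtain ⟨k, rfl⟩ := Nat.exists_eq_add_of_le hij
  exact keylem p h0 hlc hint k i

/-- if `V₁`, `V₂` are independent `ℤ₊`-valued log-concave random variables,
each with interval support containing `0`, then for every `t ≥ 0` and every `s` with
`P(V₁+V₂ = s) > 0` and `P(V₁+V₂ = s+1) > 0`,
`P(V₁ ≤ t | V₁+V₂ = s+1) ≤ P(V₁ ≤ t | V₁+V₂ = s)`. -/

theorem stmt6 (p₁ p₂ : ℕ → ℝ)
    (hp₁0 : ∀ s, 0 ≤ p₁ s) (hp₂0 : ∀ s, 0 ≤ p₂ s)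
    (hp₁1 : ∑' s, p₁ s = 1) (hp₂1 : ∑' s, p₂ s = 1)
    (hlc₁ : ∀ s : ℕ, 1 ≤ s → p₁ s ^ 2 ≥ p₁ (s - 1) * p₁ (s + 1))
    (hlc₂ : ∀ s : ℕ, 1 ≤ s → p₂ s ^ 2 ≥ p₂ (s - 1) * p₂ (s + 1))
    (hzero₁ : 0 < p₁ 0) (hint₁ : ∀ s t : ℕ, t ≤ s → 0 < p₁ s → 0 < p₁ t)
    (hzero₂ : 0 < p₂ 0) (hint₂ : ∀ s t : ℕ, t ≤ s → 0 < p₂ s → 0 < p₂ t)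
    (t s : ℕ) (hs : 0 < convProb p₁ p₂ s) (hs1 : 0 < convProb p₁ p₂ (s + 1)) :
    convProbLe p₁ p₂ t (s + 1) / convProb p₁ p₂ (s + 1) ≤
      convProbLe p₁ p₂ t s / convProb p₁ p₂ s := by
  set A := fun m => convProbLe p₁ p₂ t m with hA
  set B := fun m => ∑ x ∈ range (m + 1), if t < x then p₁ x * p₂ (m - x) else 0 with hBdef
  -- C = A + B
  have hsplit : ∀ m, convProb p₁ p₂ m = A m + B m := by
    intro m
    rw [hA, hBdef]
    simp only [convProb, convProbLe]
    rw [← Finset.sum_add_distrib]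
    apply Finset.sum_congr rfl
    intro x _
    by_cases h : x ≤ t
    · rw [if_pos h, if_neg (by omega)]; ring
    · rw [if_neg h, if_pos (by omega)]; ring
  have hAnonneg : ∀ m, 0 ≤ A m := by
    intro m
    apply Finset.sum_nonneg
    intro x _
    split_ifs
    · exact mul_nonneg (hp₁0 _) (hp₂0 _)
    · exact le_refl 0
  have hBnonneg : ∀ m, 0 ≤ B m := by
    intro m
    apply Finset.sum_nonneg
    intro x _
    split_ifs
    · exact mul_nonneg (hp₁0 _) (hp₂0 _)
    · exact le_refl 0
  rw [div_le_div_iff₀ hs1 hs]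
  have key : A (s + 1) * B s ≤ A s * B (s + 1) := by
    by_cases hts : t < s
    · -- rewrite sums
      have hAeq : ∀ m, t ≤ m → A m = ∑ x ∈ range (t + 1), p₁ x * p₂ (m - x) := by
        intro m hm
        rw [hA]
        simp only [convProbLe]
        rw [← Finset.sum_filter]
        apply Finset.sum_congr _ (fun _ _ => rfl)
        ext x
        simp only [Finset.mem_filter, Finset.mem_range]
        omega
      have hBeq : ∀ m, B m = ∑ y ∈ Finset.Ioc t m, p₁ y * p₂ (m - y) := by
        intro m
        show (∑ x ∈ range (m + 1), if t < x then p₁ x * p₂ (m - x) else 0) = _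
        rw [← Finset.sum_filter]
        apply Finset.sum_congr _ (fun _ _ => rfl)
        ext x
        simp only [Finset.mem_filter, Finset.mem_range, Finset.mem_Ioc]
        omega
      rw [hAeq (s+1) (by omega), hAeq s (by omega), hBeq s, hBeq (s+1),
        Finset.sum_mul_sum, Finset.sum_mul_sum]
      calc (∑ x ∈ range (t+1), ∑ y ∈ Finset.Ioc t s,
              (p₁ x * p₂ (s + 1 - x)) * (p₁ y * p₂ (s - y)))
          ≤ ∑ x ∈ range (t+1), ∑ y ∈ Finset.Ioc t s,
              (p₁ x * p₂ (s - x)) * (p₁ y * p₂ (s + 1 - y)) := by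
            apply Finset.sum_le_sum
            intro x hx
            apply Finset.sum_le_sum
            intro y hy
            simp only [Finset.mem_range] at hx
            simp only [Finset.mem_Ioc] at hy
            have h1 : s + 1 - x = (s - x) + 1 := by omega
            have h2 : s + 1 - y = (s - y) + 1 := by omega
            rw [h1, h2]
            have hkey := keylem' p₂ hp₂0 hlc₂ hint₂ (s - y) (s - x) (by omega)
            nlinarith [mul_nonneg (hp₁0 x) (hp₁0 y), hp₂0 (s - x), hp₂0 (s - y),
              mul_le_mul_of_nonneg_left hkey (mul_nonneg (hp₁0 x) (hp₁0 y))]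
        _ ≤ ∑ x ∈ range (t+1), ∑ y ∈ Finset.Ioc t (s+1),
              (p₁ x * p₂ (s - x)) * (p₁ y * p₂ (s + 1 - y)) := by
            apply Finset.sum_le_sum
            intro x _
            apply Finset.sum_le_sum_of_subset_of_nonneg
            · intro y hy
              simp only [Finset.mem_Ioc] at hy ⊢
              omega
            · intro y _ _
              exact mul_nonneg (mul_nonneg (hp₁0 _) (hp₂0 _)) (mul_nonneg (hp₁0 _) (hp₂0 _))
    · -- t ≥ s : B s = 0
      have hBs : B s = 0 := by
        show (∑ x ∈ range (s + 1), if t < x then p₁ x * p₂ (s - x) else 0) = 0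
        apply Finset.sum_eq_zero
        intro x hx
        simp only [Finset.mem_range] at hx
        rw [if_neg (by omega)]
      rw [hBs, mul_zero]
      exact mul_nonneg (hAnonneg _) (hBnonneg _)
  have e1 := hsplit s
  have e2 := hsplit (s + 1)
  show A (s + 1) * convProb p₁ p₂ s ≤ A s * convProb p₁ p₂ (s + 1)
  nlinarith [key, hAnonneg s, hAnonneg (s + 1), hBnonneg s, hBnonneg (s + 1)]
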